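/- If two subgroups H and H' of SO(d) are conjugate by an invertible real matrix M (i.e., H' = M H M^{-1}), then they are conjugate by an orthogonal matrix: there exists O in O(d) with H' = O H O^T. -/

import Mathlib

open Matrix

/-- If two subgroups `H, H'` of `SO(d)` are conjugate by an invertible real
matrix `M` (i.e. `H' = M H M⁻¹`), then they are conjugate by an orthogonal matrix:
there exists `O ∈ O(d)` with `H' = O H Oᵀ`. -/
theorem conjugate_subgroups_of_SO_orthogonally_conjugate
    (d : ℕ) (H H' : Set (Matrix (Fin d) (Fin d) ℝ))
    (hH : ∀ G ∈ H, G ∈ Matrix.orthogonalGroup (Fin d) ℝ ∧ G.det = 1)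
    (hH' : ∀ G ∈ H', G ∈ Matrix.orthogonalGroup (Fin d) ℝ ∧ G.det = 1)
    (M : Matrix (Fin d) (Fin d) ℝ) (hM : IsUnit M)
    (hconj : H' = (fun G => M * G * M⁻¹) '' H) :
    ∃ O ∈ Matrix.orthogonalGroup (Fin d) ℝ, H' = (fun G => O * G * Oᵀ) '' H := by
  have hA : (Mᵀ * M).PosSemidef := by
    have := Matrix.posSemidef_conjTranspose_mul_self M
    rwa [conjTranspose_eq_transpose_of_trivial] at this
  have hMdet : IsUnit M.det := (Matrix.isUnit_iff_isUnit_det M).mp hM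
  have hMTdet : IsUnit Mᵀ.det := by rw [Matrix.det_transpose]; exact hMdet
  have hAdet : IsUnit (Mᵀ * M).det := by
    rw [Matrix.det_mul]; exact hMTdet.mul hMdet
  -- obtain the positive semidefinite square root P of MᵀM, with its uniqueness property
  obtain ⟨P, hPsd, hPP, hPuniq⟩ :
      ∃ P : Matrix (Fin d) (Fin d) ℝ, P.PosSemidef ∧ P * P = Mᵀ * M ∧
        ∀ B : Matrix (Fin d) (Fin d) ℝ, B.PosSemidef → B ^ 2 = Mᵀ * M → B = P := by
    open scoped MatrixOrder in
    exact ⟨CFC.sqrt (Mᵀ * M), (CFC.sqrt_nonneg _).posSemidef, CFC.sqrt_mul_sqrt_self _ hA.nonneg,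
      fun B hB hB2 => ((CFC.sqrt_eq_iff _ _ hA.nonneg hB.nonneg).mpr (sq B ▸ hB2)).symm⟩
  have hPdet : IsUnit P.det := by
    have h1 : IsUnit (P * P).det := by rw [hPP]; exact hAdet
    rw [Matrix.det_mul] at h1
    exact isUnit_of_mul_isUnit_left h1
  have hPsymm : Pᵀ = P := by
    have := hPsd.isHermitian
    rwa [Matrix.IsHermitian, conjTranspose_eq_transpose_of_trivial] at this
  have hPinv : P⁻¹ * P = 1 := Matrix.nonsing_inv_mul P hPdet
  have hPinv' : P * P⁻¹ = 1 := Matrix.mul_nonsing_inv P hPdet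
  have hMinv : M⁻¹ * M = 1 := Matrix.nonsing_inv_mul M hMdet
  have hMinv' : M * M⁻¹ = 1 := Matrix.mul_nonsing_inv M hMdet
  have hMTinv : Mᵀ * (Mᵀ)⁻¹ = 1 := Matrix.mul_nonsing_inv Mᵀ hMTdet
  have hMTinv' : (Mᵀ)⁻¹ * Mᵀ = 1 := Matrix.nonsing_inv_mul Mᵀ hMTdet
  -- O := M * P⁻¹
  refine ⟨M * P⁻¹, ?_, ?_⟩
  · -- O is orthogonal
    rw [Matrix.mem_orthogonalGroup_iff']
    have hTr : (M * P⁻¹)ᵀ = P⁻¹ * Mᵀ := by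
      rw [Matrix.transpose_mul, Matrix.transpose_nonsing_inv, hPsymm]
    rw [hTr]
    calc P⁻¹ * Mᵀ * (M * P⁻¹) = P⁻¹ * ((Mᵀ * M) * P⁻¹) := by simp only [mul_assoc]
      _ = P⁻¹ * (P * (P * P⁻¹)) := by rw [← hPP]; simp only [mul_assoc]
      _ = P⁻¹ * P := by rw [hPinv', mul_one]
      _ = 1 := hPinv
  · -- the conjugations agree on H
    rw [hconj]
    apply Set.image_congr
    intro G hG
    obtain ⟨hGo, -⟩ := hH G hG
    have hGo' : G * Gᵀ = 1 := by
      have := (Matrix.mem_orthogonalGroup_iff _ _).mp hGo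
      exact this
    have hGo'' : Gᵀ * G = 1 := by
      have := (Matrix.mem_orthogonalGroup_iff' _ _).mp hGo
      exact this
    have hG' : M * G * M⁻¹ ∈ H' := hconj ▸ ⟨G, hG, rfl⟩
    obtain ⟨hG'o, -⟩ := hH' _ hG'
    have hG'o' : (M * G * M⁻¹)ᵀ * (M * G * M⁻¹) = 1 := by
      have := (Matrix.mem_orthogonalGroup_iff' _ _).mp hG'o
      exact this
    -- Gᵀ * (MᵀM) * G = MᵀM
    have key : Gᵀ * (Mᵀ * M) * G = Mᵀ * M := by
      have e : Mᵀ * ((M * G * M⁻¹)ᵀ * (M * G * M⁻¹)) * M = Mᵀ * M := by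
        rw [hG'o', mul_one]
      conv_rhs => rw [← e]
      rw [Matrix.transpose_mul, Matrix.transpose_mul, Matrix.transpose_nonsing_inv]
      simp only [mul_assoc, hMinv, mul_one]
      rw [← mul_assoc Mᵀ Mᵀ⁻¹, hMTinv, one_mul]
    -- MᵀM commutes with G
    have hAG : (Mᵀ * M) * G = G * (Mᵀ * M) := by
      calc (Mᵀ * M) * G = (G * Gᵀ) * ((Mᵀ * M) * G) := by rw [hGo', one_mul]
        _ = G * (Gᵀ * (Mᵀ * M) * G) := by simp only [mul_assoc]
        _ = G * (Mᵀ * M) := by rw [key]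
    -- G * P * Gᵀ is psd with square MᵀM, hence equals P
    have hB : (G * P * Gᵀ).PosSemidef := by
      have := hPsd.mul_mul_conjTranspose_same G
      rwa [conjTranspose_eq_transpose_of_trivial] at this
    have hBsq : (G * P * Gᵀ) ^ 2 = Mᵀ * M := by
      rw [pow_two]
      calc (G * P * Gᵀ) * (G * P * Gᵀ)
          = G * (P * ((Gᵀ * G) * (P * Gᵀ))) := by simp only [mul_assoc]
        _ = G * ((P * P) * Gᵀ) := by rw [hGo'', one_mul]; simp only [mul_assoc]
        _ = (Mᵀ * M) * G * Gᵀ := by rw [hPP, ← mul_assoc, hAG]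
        _ = Mᵀ * M := by rw [mul_assoc, hGo', mul_one]
    have hBeqP : G * P * Gᵀ = P := hPuniq _ hB hBsq
    have hPG : P * G = G * P := by
      have h0 : P * G = G * P * Gᵀ * G := by conv_lhs => rw [← hBeqP]
      rw [h0, mul_assoc (G * P), hGo'', mul_one]
    have hPinvG : P⁻¹ * G = G * P⁻¹ := by
      calc P⁻¹ * G = P⁻¹ * G * (P * P⁻¹) := by rw [hPinv', mul_one]
        _ = P⁻¹ * (G * P) * P⁻¹ := by simp only [mul_assoc]
        _ = P⁻¹ * (P * G) * P⁻¹ := by rw [hPG]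
        _ = G * P⁻¹ := by rw [← mul_assoc P⁻¹ P G, hPinv, one_mul]
    -- conclude
    show M * G * M⁻¹ = (M * P⁻¹) * G * (M * P⁻¹)ᵀ
    have hTr : (M * P⁻¹)ᵀ = P⁻¹ * Mᵀ := by
      rw [Matrix.transpose_mul, Matrix.transpose_nonsing_inv, hPsymm]
    rw [hTr]
    have hAinv : P⁻¹ * P⁻¹ = M⁻¹ * (Mᵀ)⁻¹ := by
      have h1 : (P * P)⁻¹ = (Mᵀ * M)⁻¹ := by rw [hPP]
      rwa [Matrix.mul_inv_rev, Matrix.mul_inv_rev] at h1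
    symm
    calc (M * P⁻¹) * G * (P⁻¹ * Mᵀ)
        = M * (P⁻¹ * G) * (P⁻¹ * Mᵀ) := by simp only [mul_assoc]
      _ = M * (G * P⁻¹) * (P⁻¹ * Mᵀ) := by rw [hPinvG]
      _ = M * G * (P⁻¹ * P⁻¹) * Mᵀ := by simp only [mul_assoc]
      _ = M * G * (M⁻¹ * (Mᵀ)⁻¹) * Mᵀ := by rw [hAinv]
      _ = M * G * M⁻¹ * ((Mᵀ)⁻¹ * Mᵀ) := by simp only [mul_assoc]
      _ = M * G * M⁻¹ := by rw [hMTinv', mul_one]
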